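/- arXiv:1311.6551 — 2 statements merged into one kernel-verified Lean document; each statement's English description precedes it below -/
import Mathlib

section
/- The monomer-dimer partition function on the complete graph K_N with monomer weight x and uniform dimer weight 1/N equals (i/√N)^N · H_N(−i·x·√N), where H_N is the N-th probabilistic Hermite polynomial. -/
open Classical in
/-- Monomer-dimer partition function of the graph `G` restricted to the vertex set `S`. -/
noncomputable def mdZ {V : Type*} [Fintype V] [DecidableEq V] (G : SimpleGraph V)
    (S : Finset V) (x : V → ℝ) (w : Sym2 V → ℝ) : ℝ :=
  ∑ M ∈ Finset.univ.filter (fun M : Finset (Sym2 V) =>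
      (∀ e ∈ M, e ∈ G.edgeSet) ∧ (∀ e ∈ M, ∀ v ∈ e, v ∈ S) ∧
      (M : Set (Sym2 V)).Pairwise (fun e f => ∀ v, v ∈ e → v ∉ f)),
    (∏ e ∈ M, w e) * ∏ v ∈ S.filter (fun v => ∀ e ∈ M, v ∉ e), x v

variable {N : ℕ}

/-- the matching predicate -/
def mOK (S : Finset (Fin N)) (M : Finset (Sym2 (Fin N))) : Prop :=
  (∀ e ∈ M, e ∈ (⊤ : SimpleGraph (Fin N)).edgeSet) ∧ (∀ e ∈ M, ∀ v ∈ e, v ∈ S) ∧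
      (M : Set (Sym2 (Fin N))).Pairwise (fun e f => ∀ v, v ∈ e → v ∉ f)

noncomputable def zz (N : ℕ) (x : ℝ) (S : Finset (Fin N)) : ℝ :=
  mdZ (⊤ : SimpleGraph (Fin N)) S (fun _ => x) (fun _ => 1 / (N : ℝ))

open Classical in
lemma zz_eq (x : ℝ) (S : Finset (Fin N)) :
    zz N x S = ∑ M ∈ Finset.univ.filter (mOK S),
      (∏ _e ∈ M, (1 / (N : ℝ))) * ∏ _v ∈ S.filter (fun v => ∀ e ∈ M, v ∉ e), x := by
  unfold zz mdZ mOK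
  congr

lemma mOK_small {S : Finset (Fin N)} (hS : S.card ≤ 1) {M : Finset (Sym2 (Fin N))}
    (h : mOK S M) : M = ∅ := by
  obtain ⟨h1, h2, _⟩ := h
  by_contra hM
  obtain ⟨e, he⟩ := Finset.nonempty_iff_ne_empty.2 hM
  induction e with
  | h a b =>
    have hab : a ≠ b := by simpa using h1 _ he
    have ha : a ∈ S := h2 _ he a (by simp)
    have hb : b ∈ S := h2 _ he b (by simp)
    have : ({a, b} : Finset (Fin N)) ⊆ S := by
      intro z hz; simp at hz; rcases hz with rfl | rfl <;> assumption
    have := Finset.card_le_card this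
    rw [Finset.card_insert_of_notMem (by simpa using hab), Finset.card_singleton] at this
    omega

lemma zz_empty (x : ℝ) : zz N x (∅ : Finset (Fin N)) = 1 := by
  classical
  rw [zz_eq]
  have : Finset.univ.filter (mOK (∅ : Finset (Fin N))) = {∅} := by
    ext M
    simp only [Finset.mem_filter, Finset.mem_univ, true_and, Finset.mem_singleton]
    constructor
    · intro h; exact mOK_small (by simp) h
    · rintro rfl
      refine ⟨by simp, by simp, by simp⟩
  rw [this]
  simp

lemma zz_single (x : ℝ) (v : Fin N) : zz N x ({v} : Finset (Fin N)) = x := by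
  classical
  rw [zz_eq]
  have : Finset.univ.filter (mOK ({v} : Finset (Fin N))) = {∅} := by
    ext M
    simp only [Finset.mem_filter, Finset.mem_univ, true_and, Finset.mem_singleton]
    constructor
    · intro h; exact mOK_small (by simp) h
    · rintro rfl
      refine ⟨by simp, by simp, by simp⟩
  rw [this]
  simp

lemma r_symm : Symmetric (fun e f : Sym2 (Fin N) => ∀ v, v ∈ e → v ∉ f) := by
  intro e f h a haf hae
  exact h a hae haf

lemma mOK_mono {S : Finset (Fin N)} {M M' : Finset (Sym2 (Fin N))} (h : mOK S M)
    (hsub : M' ⊆ M) : mOK S M' :=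
  ⟨fun e he => h.1 e (hsub he), fun e he => h.2.1 e (hsub he),
    h.2.2.mono (by exact_mod_cast hsub)⟩

open Classical in
lemma zz_rec (x : ℝ) (S : Finset (Fin N)) (v : Fin N) (hv : v ∈ S) :
    zz N x S = x * zz N x (S.erase v) +
      ∑ u ∈ S.erase v, (1 / (N : ℝ)) * zz N x ((S.erase v).erase u) := by
  classical
  rw [zz_eq]
  rw [← Finset.sum_filter_add_sum_filter_not (Finset.univ.filter (mOK S))
    (fun M => ∀ e ∈ M, v ∉ e)]
  congr 1
  -- Part A : v uncovered
  · have hset : (Finset.univ.filter (mOK S)).filter (fun M => ∀ e ∈ M, v ∉ e)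
        = Finset.univ.filter (mOK (S.erase v)) := by
      ext M
      simp only [Finset.mem_filter, Finset.mem_univ, true_and]
      constructor
      · rintro ⟨⟨h1, h2, h3⟩, hvnc⟩
        refine ⟨h1, fun e he a ha => ?_, h3⟩
        exact Finset.mem_erase.2 ⟨fun hav => hvnc e he (hav ▸ ha), h2 e he a ha⟩
      · rintro ⟨h1, h2, h3⟩
        exact ⟨⟨h1, fun e he a ha => Finset.mem_of_mem_erase (h2 e he a ha), h3⟩,
          fun e he hve => (Finset.mem_erase.1 (h2 e he v hve)).1 rfl⟩
    rw [hset, zz_eq, Finset.mul_sum]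
    refine Finset.sum_congr rfl ?_
    intro M hM
    simp only [Finset.mem_filter, Finset.mem_univ, true_and] at hM
    have hvnc : ∀ e ∈ M, v ∉ e := fun e he hve => (Finset.mem_erase.1 (hM.2.1 e he v hve)).1 rfl
    have hsetv : S.filter (fun a => ∀ e ∈ M, a ∉ e)
        = insert v ((S.erase v).filter (fun a => ∀ e ∈ M, a ∉ e)) := by
      ext a
      simp only [Finset.mem_filter, Finset.mem_insert, Finset.mem_erase]
      constructor
      · rintro ⟨haS, hq⟩
        by_cases hav : a = v
        · exact Or.inl hav
        · exact Or.inr ⟨⟨hav, haS⟩, hq⟩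
      · rintro (rfl | ⟨⟨_, haS⟩, hq⟩)
        · exact ⟨hv, hvnc⟩
        · exact ⟨haS, hq⟩
    rw [hsetv, Finset.prod_insert (by simp)]
    ring
  -- Part B : v covered
  · have hset : (Finset.univ.filter (mOK S)).filter (fun M => ¬ ∀ e ∈ M, v ∉ e)
        = (S.erase v).biUnion (fun u =>
            (Finset.univ.filter (mOK ((S.erase v).erase u))).image
              (fun M' => insert s(v, u) M')) := by
      ext M
      simp only [Finset.mem_filter, Finset.mem_univ, true_and, Finset.mem_biUnion,
        Finset.mem_image]
      constructor
      · rintro ⟨⟨h1, h2, h3⟩, hcov⟩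
        push_neg at hcov
        obtain ⟨e, he, hve⟩ := hcov
        set u := Sym2.Mem.other hve with hu
        have heq : s(v, u) = e := Sym2.other_spec hve
        have hvu : v ≠ u := by
          have := h1 e he
          rw [← heq] at this
          simpa using this
        have huS : u ∈ S := h2 e he u (by rw [← heq]; simp)
        refine ⟨u, Finset.mem_erase.2 ⟨fun h => hvu h.symm, huS⟩, M.erase e, ?_, ?_⟩
        · refine ⟨fun f hf => h1 f (Finset.mem_of_mem_erase hf),
            fun f hf a ha => ?_, h3.mono (by exact_mod_cast Finset.erase_subset _ _)⟩
          have hfe : f ≠ e := Finset.ne_of_mem_erase hf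
          have hdisj : ∀ b, b ∈ f → b ∉ e :=
            h3 (Finset.mem_coe.2 (Finset.mem_of_mem_erase hf)) (Finset.mem_coe.2 he) hfe
          have hane : a ∉ e := hdisj a ha
          refine Finset.mem_erase.2 ⟨fun h => ?_, Finset.mem_erase.2 ⟨fun h => ?_,
            h2 f (Finset.mem_of_mem_erase hf) a ha⟩⟩
          · exact hane (by rw [← heq, h]; simp)
          · exact hane (by rw [← heq, h]; simp)
        · rw [heq]; exact Finset.insert_erase he
      · rintro ⟨u, huv, M', ⟨h1, h2, h3⟩, rfl⟩
        obtain ⟨hune, huS⟩ := Finset.mem_erase.1 huv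
        have hvu : v ≠ u := fun h => hune h.symm
        have hM'v : ∀ e ∈ M', v ∉ e := fun e he hve =>
          (Finset.mem_erase.1 (Finset.mem_erase.1 (h2 e he v hve)).2).1 rfl
        have hM'u : ∀ e ∈ M', u ∉ e := fun e he hue =>
          (Finset.mem_erase.1 (h2 e he u hue)).1 rfl
        refine ⟨⟨?_, ?_, ?_⟩, ?_⟩
        · intro e he
          rcases Finset.mem_insert.1 he with rfl | he'
          · simpa using hvu
          · exact h1 e he'
        · intro e he a ha
          rcases Finset.mem_insert.1 he with rfl | he'
          · rcases Sym2.mem_iff.1 ha with rfl | rfl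
            · exact hv
            · exact huS
          · exact Finset.mem_of_mem_erase (Finset.mem_of_mem_erase (h2 e he' a ha))
        · rw [Finset.coe_insert]
          refine (haveI : Std.Symm (fun e f : Sym2 (Fin N) => ∀ v, v ∈ e → v ∉ f) := ⟨fun _ _ h => r_symm h⟩; Set.pairwise_insert_of_symm) |>.2 ⟨h3, ?_⟩
          intro f hf _ a ha haf
          rcases Sym2.mem_iff.1 ha with rfl | rfl
          · exact hM'v f hf haf
          · exact hM'u f hf haf
        · intro hall
          exact hall s(v, u) (Finset.mem_insert_self _ _) (by simp)
    rw [hset]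
    rw [Finset.sum_biUnion ?hdisj]
    case hdisj =>
      intro u1 hu1 u2 hu2 hne
      simp only [Finset.mem_coe, Finset.mem_erase] at hu1 hu2
      refine Finset.disjoint_left.2 ?_
      rintro M hM1 hM2
      simp only [Finset.mem_image, Finset.mem_filter, Finset.mem_univ, true_and] at hM1 hM2
      obtain ⟨M1, hok1, rfl⟩ := hM1
      obtain ⟨M2, hok2, heq⟩ := hM2
      have hM1v : ∀ e ∈ M1, v ∉ e := fun e he hve =>
        (Finset.mem_erase.1 (Finset.mem_erase.1 (hok1.2.1 e he v hve)).2).1 rfl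
      have : s(v, u2) ∈ insert s(v, u1) M1 := heq ▸ Finset.mem_insert_self _ _
      rcases Finset.mem_insert.1 this with h | h
      · rw [Sym2.eq_iff] at h
        rcases h with ⟨_, h⟩ | ⟨h, _⟩
        · exact hne h.symm
        · exact hu1.1 h.symm
      · exact hM1v _ h (by simp)
    refine Finset.sum_congr rfl ?_
    intro u hu
    obtain ⟨hune, huS⟩ := Finset.mem_erase.1 hu
    rw [Finset.sum_image ?hinj]
    case hinj =>
      intro M1 hM1 M2 hM2 heq
      simp only [Finset.mem_coe, Finset.mem_filter, Finset.mem_univ, true_and] at hM1 hM2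
      have h1 : s(v, u) ∉ M1 := fun h =>
        (Finset.mem_erase.1 (Finset.mem_erase.1 (hM1.2.1 _ h v (by simp))).2).1 rfl
      have h2 : s(v, u) ∉ M2 := fun h =>
        (Finset.mem_erase.1 (Finset.mem_erase.1 (hM2.2.1 _ h v (by simp))).2).1 rfl
      rw [← Finset.erase_insert h1, ← Finset.erase_insert h2]; exact congrArg (fun M => M.erase s(v, u)) heq
    rw [zz_eq, Finset.mul_sum]
    refine Finset.sum_congr rfl ?_
    intro M' hM'
    simp only [Finset.mem_filter, Finset.mem_univ, true_and] at hM'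
    have hM'v : ∀ e ∈ M', v ∉ e := fun e he hve =>
      (Finset.mem_erase.1 (Finset.mem_erase.1 (hM'.2.1 e he v hve)).2).1 rfl
    have hM'u : ∀ e ∈ M', u ∉ e := fun e he hue =>
      (Finset.mem_erase.1 (hM'.2.1 e he u hue)).1 rfl
    have hnm : s(v, u) ∉ M' := fun h => hM'v _ h (by simp)
    have hfilter : S.filter (fun a => ∀ e ∈ insert s(v, u) M', a ∉ e)
        = ((S.erase v).erase u).filter (fun a => ∀ e ∈ M', a ∉ e) := by
      ext a
      simp only [Finset.mem_filter, Finset.mem_erase, Finset.mem_insert, Sym2.mem_iff]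
      constructor
      · rintro ⟨haS, hq⟩
        have h1 := hq s(v, u) (Or.inl rfl)
        simp only [Sym2.mem_iff] at h1
        push_neg at h1
        exact ⟨⟨h1.2, h1.1, haS⟩, fun e he => hq e (Or.inr he)⟩
      · rintro ⟨⟨hau, hav, haS⟩, hq⟩
        refine ⟨haS, fun e he => ?_⟩
        rcases he with rfl | he'
        · simp only [Sym2.mem_iff]
          push_neg
          exact ⟨hav, hau⟩
        · exact hq e he'
    rw [hfilter, Finset.prod_insert hnm]
    ring

open Polynomial in
lemma herm_deriv : ∀ n : ℕ, derivative (hermite (n+1)) = (n+1 : ℤ[X]) * hermite n := by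
  intro n
  induction n with
  | zero => simp [hermite_one, hermite_zero]
  | succ n ih =>
    rw [hermite_succ (n+1), derivative_sub, derivative_mul, derivative_X, one_mul, ih,
      derivative_mul, hermite_succ n]
    push_cast
    simp only [derivative_add, derivative_one, derivative_natCast, add_zero, zero_add,
      mul_zero, sub_zero]
    ring

open Polynomial in
lemma herm_rec (y : ℂ) (n : ℕ) :
    aeval y (hermite (n+2)) = y * aeval y (hermite (n+1)) - (n+1 : ℂ) * aeval y (hermite n) := by
  rw [hermite_succ (n+1), map_sub, map_mul, aeval_X, herm_deriv, map_mul]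
  simp
  try ring

open Polynomial in
lemma key (x : ℝ) (n : ℕ) : ∀ (S : Finset (Fin N)), S.card = n →
    ((zz N x S : ℝ) : ℂ) = (Complex.I / (Real.sqrt N : ℂ)) ^ n *
      aeval (-Complex.I * (x : ℂ) * (Real.sqrt N : ℂ)) (hermite n) := by
  induction n using Nat.strong_induction_on with
  | _ n ih =>
    match n with
    | 0 =>
      intro S hS
      rw [Finset.card_eq_zero] at hS
      subst hS
      simp [zz_empty, hermite_zero]
    | 1 =>
      intro S hS
      rw [Finset.card_eq_one] at hS
      obtain ⟨v, rfl⟩ := hS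
      rw [zz_single]
      have hN : 0 < N := v.pos
      have hs : (Real.sqrt N : ℂ) ≠ 0 := by
        simp only [ne_eq, Complex.ofReal_eq_zero]
        positivity
      rw [hermite_one, aeval_X, pow_one]
      rw [show (Complex.I / (Real.sqrt N : ℂ)) * (-Complex.I * x * (Real.sqrt N : ℂ))
        = (-(Complex.I * Complex.I)) * x * ((Real.sqrt N : ℂ) / (Real.sqrt N : ℂ)) by ring]
      rw [Complex.I_mul_I, div_self hs]
      ring
    | n + 2 =>
      intro S hS
      have hSne : S.Nonempty := Finset.card_pos.1 (by omega)
      obtain ⟨v, hv⟩ := hSne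
      have hN : 0 < N := v.pos
      have hs : (Real.sqrt N : ℂ) ≠ 0 := by
        simp only [ne_eq, Complex.ofReal_eq_zero]
        positivity
      have hs2 : ((Real.sqrt N : ℂ)) ^ 2 = (N : ℂ) := by
        rw [← Complex.ofReal_pow, Real.sq_sqrt (by positivity)]; norm_cast
      have hNC : (N : ℂ) ≠ 0 := by
        simp only [ne_eq, Nat.cast_eq_zero]
        omega
      have hc1 : (S.erase v).card = n + 1 := by
        rw [Finset.card_erase_of_mem hv, hS]
        omega
      rw [zz_rec x S v hv]
      push_cast
      rw [ih (n+1) (by omega) (S.erase v) hc1]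
      rw [Finset.sum_congr rfl (fun u hu => by
        rw [ih n (by omega) ((S.erase v).erase u)
          (by rw [Finset.card_erase_of_mem hu, hc1]; omega) ] )]
      rw [Finset.sum_const, hc1, herm_rec]
      set s : ℂ := (Real.sqrt N : ℂ)
      set A : ℂ := aeval (-Complex.I * x * s) (hermite (n+1))
      set B : ℂ := aeval (-Complex.I * x * s) (hermite n)
      have hIy : (Complex.I / s) * (-Complex.I * x * s) = x := by
        rw [show (Complex.I / s) * (-Complex.I * x * s)
          = (-(Complex.I * Complex.I)) * x * (s / s) by ring]
        rw [Complex.I_mul_I, div_self hs]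
        ring
      have hI2 : (Complex.I / s) ^ 2 = -(1 / (N : ℂ)) := by
        rw [div_pow, Complex.I_sq, hs2]
        ring
      rw [pow_succ, pow_succ, nsmul_eq_mul]
      push_cast
      linear_combination (-A * (Complex.I / s) ^ (n+1)) * hIy +
        (((n:ℂ)+1) * B * (Complex.I / s) ^ n) * hI2


/-- `Z_N(x) = (i/√N)^N · H_N(−i·x·√N)`, with `H_N` the `N`-th
probabilistic Hermite polynomial. -/
theorem stmt4 (N : ℕ) (hN : 0 < N) (x : ℝ) :
    (mdZ (⊤ : SimpleGraph (Fin N)) Finset.univ (fun _ => x) (fun _ => 1 / (N : ℝ)) : ℂ) =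
      (Complex.I / (Real.sqrt N : ℂ)) ^ N *
        Polynomial.aeval (-Complex.I * (x : ℂ) * (Real.sqrt N : ℂ)) (Polynomial.hermite N) := by
  have h := key (N := N) x N Finset.univ (by simp)
  simpa [zz] using h
end

section
/- For every x > 0, the normalized pressure (1/N)·log Z_N(x) of the mean-field monomer-dimer model converges as N → ∞ to p(x) = f(x)(1 − log f(x) − log 2) + g(x)(1 − log g(x) + log x) − 1, where f(x) = (2 + x² − √(x⁴+4x²))/4 and g(x) = 1 − 2f(x). -/
/-- Mean-field monomer-dimer partition function (explicit expansion). -/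
noncomputable def mfZ (N : ℕ) (x : ℝ) : ℝ :=
  ∑ d ∈ Finset.range (N / 2 + 1),
    (N.factorial : ℝ) / (d.factorial * (N - 2 * d).factorial * (2 * N) ^ d)
      * x ^ (N - 2 * d)

noncomputable def fMD (x : ℝ) : ℝ := (2 + x ^ 2 - Real.sqrt (x ^ 4 + 4 * x ^ 2)) / 4

noncomputable def gMD (x : ℝ) : ℝ := 1 - 2 * fMD x

/-- Limiting pressure of the mean-field monomer-dimer model. -/
noncomputable def pMD (x : ℝ) : ℝ :=
  fMD x * (1 - Real.log (fMD x) - Real.log 2)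
    + gMD x * (1 - Real.log (gMD x) + Real.log x) - 1

open Real Filter


lemma log_factorial_ge (n : ℕ) : (n : ℝ) * Real.log n - n ≤ Real.log n.factorial := by
  rcases Nat.eq_zero_or_pos n with h | h
  · simp [h]
  have hn : (0:ℝ) < n := by exact_mod_cast h
  have h1 : (n:ℝ) ^ n / n.factorial ≤ Real.exp n := Real.pow_div_factorial_le_exp _ hn.le n
  have hf : (0:ℝ) < n.factorial := by exact_mod_cast n.factorial_pos
  have h2 : (n:ℝ) ^ n ≤ n.factorial * Real.exp n := by
    rw [div_le_iff₀ hf] at h1; linarith [h1]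
  have h3 := Real.log_le_log (by positivity) h2
  rw [Real.log_pow, Real.log_mul hf.ne' (Real.exp_ne_zero _), Real.log_exp] at h3
  linarith

lemma log_factorial_le (n : ℕ) : Real.log n.factorial ≤ (n : ℝ) * Real.log n - n + (1 + Real.log (n + 1)) := by
  rcases Nat.eq_zero_or_pos n with h | h
  · simp [h]
  have hn : (0:ℝ) < n := by exact_mod_cast h
  -- stirlingSeq n ≤ stirlingSeq 1 for n ≥ 1
  obtain ⟨m, rfl⟩ := Nat.exists_eq_add_of_le h
  set n := 1 + m with hn'
  have hmono := Stirling.log_stirlingSeq'_antitone (Nat.zero_le m)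
  simp only [Function.comp] at hmono
  have h1 : Real.log (Stirling.stirlingSeq n) ≤ Real.log (Stirling.stirlingSeq 1) := by
    simpa [Nat.succ_eq_add_one, hn', add_comm] using hmono
  rw [Stirling.log_stirlingSeq_formula] at h1
  have hs1 : Real.log (Stirling.stirlingSeq 1) ≤ 1 := by
    rw [Stirling.stirlingSeq_one, Real.log_div (Real.exp_ne_zero _) (by positivity), Real.log_exp]
    have : 0 ≤ Real.log (Real.sqrt 2) := Real.log_nonneg (by
      rw [show (1:ℝ) = Real.sqrt 1 by simp]
      exact Real.sqrt_le_sqrt (by norm_num))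
    linarith
  have hlog2n : Real.log (2 * n) ≤ 2 * Real.log (n + 1) := by
    rw [show (2:ℝ) * Real.log (n+1) = Real.log ((n+1)^2) by rw [Real.log_pow]; push_cast; ring]
    apply Real.log_le_log (by positivity)
    nlinarith
  have hdiv : Real.log ((n:ℝ) / Real.exp 1) = Real.log n - 1 := by
    rw [Real.log_div hn.ne' (Real.exp_ne_zero _), Real.log_exp]
  rw [hdiv] at h1
  nlinarith [h1, hs1, hlog2n]

lemma gibbs {a b : ℝ} (ha : 0 ≤ a) (hb : 0 < b) :
    -(a * Real.log a) ≤ -(a * Real.log b) + b - a := by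
  rcases eq_or_lt_of_le ha with h | h
  · simp [← h]; positivity
  have h1 : Real.log (b / a) ≤ b / a - 1 := Real.log_le_sub_one_of_pos (by positivity)
  rw [Real.log_div hb.ne' h.ne'] at h1
  have h2 : a * (Real.log b - Real.log a) ≤ a * (b / a - 1) := by
    exact mul_le_mul_of_nonneg_left h1 ha
  have h3 : a * (b / a - 1) = b - a := by field_simp
  nlinarith [h2]


lemma fMD_pos {x : ℝ} (hx : 0 < x) : 0 < fMD x := by
  have h : Real.sqrt (x ^ 4 + 4 * x ^ 2) < 2 + x ^ 2 := by
    rw [Real.sqrt_lt' (by positivity)]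
    nlinarith
  unfold fMD; linarith

lemma gMD_pos {x : ℝ} (hx : 0 < x) : 0 < gMD x := by
  have h : x ^ 2 < Real.sqrt (x ^ 4 + 4 * x ^ 2) := by
    rw [Real.lt_sqrt (by positivity)]
    nlinarith
  unfold gMD fMD; linarith

lemma key_id {x : ℝ} (hx : 0 < x) : gMD x ^ 2 = 2 * fMD x * x ^ 2 := by
  have hs : Real.sqrt (x ^ 4 + 4 * x ^ 2) ^ 2 = x ^ 4 + 4 * x ^ 2 :=
    Real.sq_sqrt (by positivity)
  unfold gMD fMD; nlinarith [hs]

lemma log_id {x : ℝ} (hx : 0 < x) :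
    2 * Real.log (gMD x) = Real.log 2 + Real.log (fMD x) + 2 * Real.log x := by
  have hf := fMD_pos hx
  have hg := gMD_pos hx
  have h := congrArg Real.log (key_id hx)
  rw [Real.log_pow, Real.log_mul (by positivity) (by positivity),
    Real.log_mul (by norm_num) hf.ne', Real.log_pow] at h
  push_cast at h
  linarith

/-- The entropy-type function whose max over `[0,1/2]` is the pressure. -/
noncomputable def SS (x t : ℝ) : ℝ :=
  -t - t * Real.log t - (1 - 2 * t) * Real.log (1 - 2 * t)
    - t * Real.log 2 + (1 - 2 * t) * Real.log x

lemma SS_f (x : ℝ) : SS x (fMD x) = pMD x := by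
  simp only [SS, pMD, gMD]; ring

/-- One term of the partition function. -/
noncomputable def mfT (N d : ℕ) (x : ℝ) : ℝ :=
  (N.factorial : ℝ) / (d.factorial * (N - 2 * d).factorial * (2 * N) ^ d)
      * x ^ (N - 2 * d)

lemma mfT_pos {x : ℝ} (hx : 0 < x) (N d : ℕ) (hN : 1 ≤ N) : 0 < mfT N d x := by
  have h1 : (0:ℝ) < N.factorial := by exact_mod_cast N.factorial_pos
  have h2 : (0:ℝ) < d.factorial := by exact_mod_cast d.factorial_pos
  have h3 : (0:ℝ) < (N - 2*d).factorial := by exact_mod_cast (N - 2*d).factorial_pos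
  have h4 : (0:ℝ) < (2 * (N:ℝ)) ^ d := by
    have : (0:ℝ) < (N:ℝ) := by exact_mod_cast hN
    positivity
  unfold mfT
  push_cast
  positivity

lemma log_mfT {x : ℝ} (hx : 0 < x) (N d : ℕ) (hN : 1 ≤ N) :
    Real.log (mfT N d x) = Real.log N.factorial - Real.log d.factorial
      - Real.log (N - 2 * d).factorial - d * Real.log (2 * N)
      + (N - 2 * d : ℕ) * Real.log x := by
  have h1 : ((N.factorial : ℕ):ℝ) ≠ 0 := by exact_mod_cast N.factorial_pos.ne'
  have h2 : ((d.factorial : ℕ):ℝ) ≠ 0 := by exact_mod_cast d.factorial_pos.ne'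
  have h3 : (((N - 2*d).factorial : ℕ):ℝ) ≠ 0 := by exact_mod_cast (N - 2*d).factorial_pos.ne'
  have hNpos : (0:ℝ) < (N:ℝ) := by exact_mod_cast hN
  have h4 : ((2:ℝ) * (N:ℝ)) ^ d ≠ 0 := by positivity
  unfold mfT
  rw [Real.log_mul (by positivity) (by positivity), Real.log_div h1 (by positivity),
    Real.log_mul (by positivity) h4, Real.log_mul h2 h3, Real.log_pow, Real.log_pow]
  ring

lemma term_le {x : ℝ} (hx : 0 < x) {N d : ℕ} (hN : 1 ≤ N) (hd : 2 * d ≤ N) :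
    Real.log (mfT N d x) ≤ N * pMD x + 1 + Real.log (N + 1) := by
  have hf := fMD_pos hx
  have hg := gMD_pos hx
  have hgf : gMD x = 1 - 2 * fMD x := rfl
  have hNpos : (0:ℝ) < (N:ℝ) := by exact_mod_cast hN
  set M : ℕ := N - 2 * d with hMdef
  have hM : (M:ℝ) = (N:ℝ) - 2 * d := by
    rw [hMdef]; push_cast [hd]; ring
  rw [log_mfT hx N d hN]
  simp only [← hMdef]
  have s1 := log_factorial_le N
  have s2 := log_factorial_ge d
  have s3 := log_factorial_ge M
  have g1 : -((d:ℝ) * Real.log d) ≤ -((d:ℝ) * Real.log (fMD x * N)) + fMD x * N - d :=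
    gibbs (Nat.cast_nonneg d) (by positivity)
  have g2 : -((M:ℝ) * Real.log M) ≤ -((M:ℝ) * Real.log (gMD x * N)) + gMD x * N - M :=
    gibbs (Nat.cast_nonneg M) (by positivity)
  rw [Real.log_mul hf.ne' hNpos.ne'] at g1
  rw [Real.log_mul hg.ne' hNpos.ne'] at g2
  have h2N : Real.log (2 * (N:ℝ)) = Real.log 2 + Real.log N :=
    Real.log_mul (by norm_num) hNpos.ne'
  have hpN : (N:ℝ) * pMD x = -(fMD x * N) - fMD x * N * Real.log (fMD x)
      - gMD x * N * Real.log (gMD x) - fMD x * N * Real.log 2 + gMD x * N * Real.log x := by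
    simp only [pMD, gMD]; ring
  have hlid := log_id hx
  have hzero : (d:ℝ) * Real.log (fMD x) + d * Real.log 2 + 2 * d * Real.log x
      - 2 * d * Real.log (gMD x) - fMD x * N * Real.log (fMD x) - fMD x * N * Real.log 2
      - 2 * (fMD x * N) * Real.log x + 2 * (fMD x * N) * Real.log (gMD x) = 0 := by
    linear_combination (fMD x * (N:ℝ) - (d:ℝ)) * hlid
  have eq2N : gMD x * (N:ℝ) = N - 2 * (fMD x * N) := by rw [hgf]; ring
  have eq4 : (M:ℝ) * Real.log (gMD x) = N * Real.log (gMD x) - 2 * d * Real.log (gMD x) := by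
    rw [hM]; ring
  have eq5 : gMD x * (N:ℝ) * Real.log (gMD x)
      = N * Real.log (gMD x) - 2 * (fMD x * N) * Real.log (gMD x) := by rw [hgf]; ring
  have eq6 : gMD x * (N:ℝ) * Real.log x
      = N * Real.log x - 2 * (fMD x * N) * Real.log x := by rw [hgf]; ring
  have eq7 : (M:ℝ) * Real.log x = N * Real.log x - 2 * d * Real.log x := by rw [hM]; ring
  have eq8 : (M:ℝ) * Real.log N = N * Real.log N - 2 * d * Real.log N := by rw [hM]; ring
  have eqd2N : (d:ℝ) * Real.log (2 * N) = d * Real.log 2 + d * Real.log N := by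
    rw [h2N]; ring
  have eqM : (M:ℝ) = N - 2*d := hM
  linarith [s1, s2, s3, g1, g2, hpN, hzero, eq2N, eq4, eq5, eq6, eq7, eq8, eqd2N, eqM]

lemma term_ge {x : ℝ} (hx : 0 < x) {N d : ℕ} (hd1 : 1 ≤ d) (hdN : 2 * d + 1 ≤ N) :
    (N:ℝ) * SS x ((d:ℝ) / N) - (2 + 2 * Real.log (N + 1)) ≤ Real.log (mfT N d x) := by
  have hN : 1 ≤ N := le_trans (by omega) hdN
  have hd : 2 * d ≤ N := by omega
  have hNpos : (0:ℝ) < (N:ℝ) := by exact_mod_cast hN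
  have hdpos : (0:ℝ) < (d:ℝ) := by exact_mod_cast hd1
  set M : ℕ := N - 2 * d with hMdef
  have hM1 : 1 ≤ M := by omega
  have hMpos : (0:ℝ) < (M:ℝ) := by exact_mod_cast hM1
  have hM : (M:ℝ) = (N:ℝ) - 2 * d := by rw [hMdef]; push_cast [hd]; ring
  rw [log_mfT hx N d hN]
  simp only [← hMdef]
  have hSS : (N:ℝ) * SS x ((d:ℝ)/N) = -(d:ℝ) - d * Real.log d + d * Real.log N
      - M * Real.log M + M * Real.log N - d * Real.log 2 + M * Real.log x := by
    unfold SS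
    have h1 : 1 - 2 * ((d:ℝ)/N) = (M:ℝ)/N := by rw [hM]; field_simp
    rw [h1, Real.log_div hdpos.ne' hNpos.ne', Real.log_div hMpos.ne' hNpos.ne']
    field_simp
    ring
  rw [hSS]
  have s1 := log_factorial_ge N
  have s2 := log_factorial_le d
  have s3 := log_factorial_le M
  have h2N : (d:ℝ) * Real.log (2 * N) = d * Real.log 2 + d * Real.log N := by
    rw [Real.log_mul (by norm_num) hNpos.ne']; ring
  have hd1' : Real.log ((d:ℝ) + 1) ≤ Real.log ((N:ℝ) + 1) := by
    apply Real.log_le_log (by positivity)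
    have : (d:ℝ) ≤ N := by exact_mod_cast le_trans (by omega) hdN
    linarith
  have hM1' : Real.log ((M:ℝ) + 1) ≤ Real.log ((N:ℝ) + 1) := by
    apply Real.log_le_log (by positivity)
    have : (M:ℝ) ≤ N := by rw [hM]; linarith
    linarith
  have eq8 : (M:ℝ) * Real.log N = N * Real.log N - 2 * d * Real.log N := by rw [hM]; ring
  have eqM : (M:ℝ) = N - 2 * d := hM
  linarith [s1, s2, s3, h2N, hd1', hM1', eq8, eqM]

lemma log_succ_div_tendsto : Filter.Tendsto (fun N : ℕ => Real.log (N + 1) / N) Filter.atTop (nhds 0) := by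
  have h1 : Filter.Tendsto (fun N : ℕ => Real.log (N + 1) / (N + 1)) Filter.atTop (nhds 0) := by
    have h0 : Filter.Tendsto (fun y : ℝ => Real.log y / y) Filter.atTop (nhds 0) :=
      Real.isLittleO_log_id_atTop.tendsto_div_nhds_zero
    have h2 : Filter.Tendsto (fun N : ℕ => ((N:ℝ) + 1)) Filter.atTop Filter.atTop :=
      Filter.tendsto_atTop_add_const_right _ 1 tendsto_natCast_atTop_atTop
    exact h0.comp h2
  have h3 : Filter.Tendsto (fun N : ℕ => ((N:ℝ) + 1) / N) Filter.atTop (nhds 1) := by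
    have h4 : Filter.Tendsto (fun N : ℕ => 1 + (1:ℝ) / N) Filter.atTop (nhds 1) := by
      have : Filter.Tendsto (fun n : ℕ => 1 / (n:ℝ)) Filter.atTop (nhds 0) := tendsto_one_div_atTop_nhds_zero_nat
      have h5 := this.const_add (1:ℝ)
      simpa using h5
    apply h4.congr'
    filter_upwards [Filter.eventually_ge_atTop 1] with N hN
    have : (N:ℝ) ≠ 0 := by positivity
    field_simp
  have := h1.mul h3
  rw [zero_mul] at this
  apply this.congr'
  filter_upwards [Filter.eventually_ge_atTop 1] with N hN
  have h : (N:ℝ) ≠ 0 := by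
    have : (0:ℝ) < N := by exact_mod_cast hN
    exact this.ne'
  field_simp

lemma floor_div_tendsto {f : ℝ} (hf : 0 < f) :
    Filter.Tendsto (fun N : ℕ => ((⌊f * N⌋₊ : ℝ) / N)) Filter.atTop (nhds f) := by
  refine tendsto_of_tendsto_of_tendsto_of_le_of_le'
    (g := fun N : ℕ => f - 1 / (N:ℝ)) (h := fun _ : ℕ => f) ?_ ?_ ?_ ?_
  · have : Filter.Tendsto (fun n : ℕ => 1 / (n:ℝ)) Filter.atTop (nhds 0) := tendsto_one_div_atTop_nhds_zero_nat
    have h := (tendsto_const_nhds (x := f) (f := Filter.atTop (α := ℕ))).sub this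
    simpa using h
  · exact tendsto_const_nhds
  · filter_upwards [Filter.eventually_ge_atTop 1] with N hN
    have hNpos : (0:ℝ) < N := by exact_mod_cast hN
    have h := Nat.sub_one_lt_floor (f * N)
    rw [sub_le_iff_le_add, div_add' _ _ _ hNpos.ne', le_div_iff₀ hNpos]
    have h1 : (1:ℝ) / N * N = 1 := by field_simp
    nlinarith [h]
  · filter_upwards [Filter.eventually_ge_atTop 1] with N hN
    have hNpos : (0:ℝ) < N := by exact_mod_cast hN
    have h := Nat.floor_le (by positivity : (0:ℝ) ≤ f * N)
    rw [div_le_iff₀ hNpos]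
    linarith

lemma SS_continuousAt {x : ℝ} (hx : 0 < x) : ContinuousAt (SS x) (fMD x) := by
  have hf := fMD_pos hx
  have hg := gMD_pos hx
  have hg' : 1 - 2 * fMD x ≠ 0 := by
    have : gMD x = 1 - 2 * fMD x := rfl
    linarith [hg, this ▸ hg]
  have c1 : ContinuousAt (fun t : ℝ => 1 - 2 * t) (fMD x) := by fun_prop
  have c2 : ContinuousAt (fun t : ℝ => Real.log t) (fMD x) := Real.continuousAt_log hf.ne'
  have c3 : ContinuousAt (fun t : ℝ => Real.log (1 - 2 * t)) (fMD x) := by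
    have c3' : ContinuousAt (Real.log ∘ fun t : ℝ => 1 - 2 * t) (fMD x) :=
      ContinuousAt.comp (Real.continuousAt_log hg') c1
    exact c3'

  unfold SS
  exact ((((continuousAt_id.neg.sub (continuousAt_id.mul c2)).sub (c1.mul c3)).sub
    (continuousAt_id.mul continuousAt_const)).add (c1.mul continuousAt_const))


lemma mfZ_eq (N : ℕ) (x : ℝ) : mfZ N x = ∑ d ∈ Finset.range (N / 2 + 1), mfT N d x := rfl

/-- for every `x > 0`, `(1/N)·log Z_N(x) → p(x)` as `N → ∞`. -/
theorem stmt6 (x : ℝ) (hx : 0 < x) :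
    Filter.Tendsto (fun N : ℕ => Real.log (mfZ N x) / N) Filter.atTop (nhds (pMD x)) := by
  have hf := fMD_pos hx
  have hg := gMD_pos hx
  have hgf : gMD x = 1 - 2 * fMD x := rfl
  -- error terms tend to zero
  have hc : Filter.Tendsto (fun N : ℕ => (2 + 2 * Real.log (N + 1)) / N)
      Filter.atTop (nhds 0) := by
    have h := (tendsto_const_div_atTop_nhds_zero_nat 2).add (log_succ_div_tendsto.const_mul 2)
    norm_num at h
    apply h.congr
    intro N
    ring
  have hc' : Filter.Tendsto (fun N : ℕ => (1 + 2 * Real.log (N + 1)) / N)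
      Filter.atTop (nhds 0) := by
    have h := (tendsto_const_div_atTop_nhds_zero_nat 1).add (log_succ_div_tendsto.const_mul 2)
    norm_num at h
    apply h.congr
    intro N
    ring
  -- lower sequence tends to pMD
  have hlowT : Filter.Tendsto
      (fun N : ℕ => SS x ((⌊fMD x * N⌋₊ : ℝ) / N) - (2 + 2 * Real.log (N + 1)) / N)
      Filter.atTop (nhds (pMD x)) := by
    have ha := floor_div_tendsto hf
    have hb := (SS_continuousAt hx).tendsto.comp ha
    have hcomb := hb.sub hc
    rw [sub_zero] at hcomb
    simpa [Function.comp, SS_f] using hcomb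
  have hupT : Filter.Tendsto
      (fun N : ℕ => pMD x + (1 + 2 * Real.log (N + 1)) / N)
      Filter.atTop (nhds (pMD x)) := by
    have := (tendsto_const_nhds (x := pMD x) (f := Filter.atTop (α := ℕ))).add hc'
    simpa using this
  refine tendsto_of_tendsto_of_tendsto_of_le_of_le' hlowT hupT ?_ ?_
  · -- lower bound eventually
    have hfat : Filter.Tendsto (fun N : ℕ => fMD x * N) Filter.atTop Filter.atTop :=
      Filter.Tendsto.const_mul_atTop hf tendsto_natCast_atTop_atTop
    have hgat : Filter.Tendsto (fun N : ℕ => gMD x * N) Filter.atTop Filter.atTop :=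
      Filter.Tendsto.const_mul_atTop hg tendsto_natCast_atTop_atTop
    filter_upwards [hfat.eventually_ge_atTop 1, hgat.eventually_ge_atTop 1,
      Filter.eventually_ge_atTop 1] with N h1 h2 h3
    set dN : ℕ := ⌊fMD x * N⌋₊ with hdN
    have hNpos : (0:ℝ) < N := by exact_mod_cast h3
    have hd1 : 1 ≤ dN := Nat.le_floor (by exact_mod_cast h1)
    have hdle : (dN : ℝ) ≤ fMD x * N := Nat.floor_le (by positivity)
    have h2d : 2 * dN + 1 ≤ N := by
      have hr : 2 * (dN:ℝ) + 1 ≤ N := by nlinarith [hdle, h2, hgf]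
      exact_mod_cast hr
    have hterm := term_ge hx hd1 h2d
    have hmem : dN ∈ Finset.range (N / 2 + 1) := by
      rw [Finset.mem_range]; omega
    have hN1 : 1 ≤ N := by omega
    have hsum : mfT N dN x ≤ mfZ N x := by
      rw [mfZ_eq]
      exact Finset.single_le_sum (fun i _ => (mfT_pos hx N i hN1).le) hmem
    have hlog : Real.log (mfT N dN x) ≤ Real.log (mfZ N x) :=
      Real.log_le_log (mfT_pos hx N dN hN1) hsum
    have key : (N:ℝ) * SS x ((dN:ℝ)/N) - (2 + 2 * Real.log (N+1)) ≤ Real.log (mfZ N x) :=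
      le_trans hterm hlog
    have hrw : SS x ((dN:ℝ)/N) - (2 + 2 * Real.log (N+1))/N
        = ((N:ℝ) * SS x ((dN:ℝ)/N) - (2 + 2 * Real.log (N+1)))/N := by
      field_simp
    rw [hrw]
    exact (div_le_div_iff_of_pos_right hNpos).mpr key
  · -- upper bound eventually
    filter_upwards [Filter.eventually_ge_atTop 1] with N h3
    have hNpos : (0:ℝ) < N := by exact_mod_cast h3
    have hterm : ∀ d ∈ Finset.range (N / 2 + 1),
        mfT N d x ≤ Real.exp ((N:ℝ) * pMD x + 1 + Real.log (N + 1)) := by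
      intro d hd
      rw [Finset.mem_range] at hd
      have h2d : 2 * d ≤ N := by omega
      rw [← Real.exp_log (mfT_pos hx N d h3)]
      exact Real.exp_le_exp.mpr (term_le hx h3 h2d)
    have hsum : mfZ N x ≤ ((N / 2 + 1 : ℕ):ℝ) * Real.exp ((N:ℝ) * pMD x + 1 + Real.log (N + 1)) := by
      rw [mfZ_eq]
      calc ∑ d ∈ Finset.range (N / 2 + 1), mfT N d x
          ≤ ∑ _d ∈ Finset.range (N / 2 + 1), Real.exp ((N:ℝ) * pMD x + 1 + Real.log (N + 1)) :=
            Finset.sum_le_sum hterm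
        _ = ((N / 2 + 1 : ℕ):ℝ) * Real.exp ((N:ℝ) * pMD x + 1 + Real.log (N + 1)) := by
            rw [Finset.sum_const, Finset.card_range, nsmul_eq_mul]
    have hZpos : 0 < mfZ N x := by
      have hmem0 : 0 ∈ Finset.range (N / 2 + 1) := by simp
      calc (0:ℝ) < mfT N 0 x := mfT_pos hx N 0 h3
        _ ≤ mfZ N x := by
          rw [mfZ_eq]
          exact Finset.single_le_sum (fun i _ => (mfT_pos hx N i h3).le) hmem0
    have hlog := Real.log_le_log hZpos hsum
    rw [Real.log_mul (by positivity) (Real.exp_ne_zero _), Real.log_exp] at hlog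
    have hcard : Real.log ((N / 2 + 1 : ℕ):ℝ) ≤ Real.log ((N:ℝ) + 1) := by
      apply Real.log_le_log (by positivity)
      have : (N / 2 + 1 : ℕ) ≤ N + 1 := by omega
      exact_mod_cast this
    have key : Real.log (mfZ N x) ≤ (N:ℝ) * pMD x + 1 + 2 * Real.log ((N:ℝ) + 1) := by
      linarith
    have hrw : pMD x + (1 + 2 * Real.log ((N:ℝ)+1))/N
        = ((N:ℝ) * pMD x + 1 + 2 * Real.log ((N:ℝ)+1))/N := by
      field_simp
      ring
    rw [hrw]
    exact (div_le_div_iff_of_pos_right hNpos).mpr key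
end
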